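/- Let Γ be a discrete subring of ℂ containing 1. Let γ_0, γ_1, γ_2 ∈ ℂ be such that |γ_0| > 1, |γ_1| > 1, 0 < |γ_2| ≤ 1, and γ_j − γ_{j−1}^{−1} ∈ Γ for j = 1, 2. For j = 1, 2 set α_j = γ_j − γ_{j−1}^{−1}, and suppose |α_2| > 1. Then |α_2| < 2, γ_1 lies in the closed disc of center −ᾱ_2/(|α_2|² − 1) and radius 1/(|α_2|² − 1), and α_1 lies in the open disc of center −ᾱ_2/(|α_2|² − 1) and radius |α_2|²/(|α_2|² − 1), i.e. |(|α_2|² − 1)·α_1 + ᾱ_2| < |α_2|². -/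

import Mathlib

/-- Lemma 5.2: if `|γ₀| > 1`, `|γ₁| > 1`, `0 < |γ₂| ≤ 1`, `α₁ = γ₁ - γ₀⁻¹ ∈ Γ`,
`α₂ = γ₂ - γ₁⁻¹ ∈ Γ` and `|α₂| > 1`, then `|α₂| < 2`,
`γ₁ ∈ B̄(-ᾱ₂/(|α₂|²-1), 1/(|α₂|²-1))` and `α₁ ∈ B(-ᾱ₂/(|α₂|²-1), |α₂|²/(|α₂|²-1))`. -/
theorem stmt_14 (Γ : Subring ℂ) (hdisc : DiscreteTopology Γ)
    (γ₀ γ₁ γ₂ : ℂ)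
    (h0 : 1 < ‖γ₀‖) (h1 : 1 < ‖γ₁‖)
    (h2pos : 0 < ‖γ₂‖) (h2le : ‖γ₂‖ ≤ 1)
    (hmem1 : γ₁ - γ₀⁻¹ ∈ Γ) (hmem2 : γ₂ - γ₁⁻¹ ∈ Γ)
    (hα2 : 1 < ‖γ₂ - γ₁⁻¹‖) :
    ‖γ₂ - γ₁⁻¹‖ < 2
    ∧ γ₁ ∈ Metric.closedBall
        (-(starRingEnd ℂ) (γ₂ - γ₁⁻¹) / ((‖γ₂ - γ₁⁻¹‖ ^ 2 - 1 : ℝ) : ℂ))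
        (1 / (‖γ₂ - γ₁⁻¹‖ ^ 2 - 1))
    ∧ (γ₁ - γ₀⁻¹) ∈ Metric.ball
        (-(starRingEnd ℂ) (γ₂ - γ₁⁻¹) / ((‖γ₂ - γ₁⁻¹‖ ^ 2 - 1 : ℝ) : ℂ))
        (‖γ₂ - γ₁⁻¹‖ ^ 2 / (‖γ₂ - γ₁⁻¹‖ ^ 2 - 1)) := by
  set α : ℂ := γ₂ - γ₁⁻¹ with hαdef
  set a : ℝ := ‖α‖ with hadef
  set t : ℝ := a ^ 2 - 1 with htdef
  clear_value t
  clear_value a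
  clear_value α
  have hγ₁0 : γ₁ ≠ 0 := by
    intro h
    rw [h] at h1
    simp at h1
    linarith
  have hγ₀0 : γ₀ ≠ 0 := by
    intro h
    rw [h] at h0
    simp at h0
    linarith
  have ht : 0 < t := by
    have : 1 < a := hα2
    nlinarith
  have htC : ((t : ℝ) : ℂ) ≠ 0 := by
    exact_mod_cast ne_of_gt ht
  -- constraint in polynomial form
  have hmul : γ₂ * γ₁ = α * γ₁ + 1 := by
    rw [hαdef, sub_mul, inv_mul_cancel₀ hγ₁0]; ring
  have H : ‖α * γ₁ + 1‖ ≤ ‖γ₁‖ := by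
    rw [← hmul, norm_mul]
    have := norm_nonneg γ₁
    nlinarith
  -- part 1
  have hinv1 : ‖γ₁⁻¹‖ < 1 := by
    rw [norm_inv, inv_lt_one_iff₀]
    right; exact h1
  have hinv0 : ‖γ₀⁻¹‖ < 1 := by
    rw [norm_inv, inv_lt_one_iff₀]
    right; exact h0
  have p1 : a < 2 := by
    have htri : ‖γ₂ - γ₁⁻¹‖ ≤ ‖γ₂‖ + ‖γ₁⁻¹‖ := by
      simpa using norm_sub_le γ₂ γ₁⁻¹
    rw [hadef, hαdef]
    linarith
  -- key inequality
  have key : ‖((t : ℝ) : ℂ) * γ₁ + (starRingEnd ℂ) α‖ ≤ 1 := by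
    set z : ℂ := ((t : ℝ) : ℂ) * γ₁ + (starRingEnd ℂ) α with hz
    clear_value z
    have hznonneg := norm_nonneg z
    have hzsq : ‖z‖ ^ 2 = Complex.normSq z := Complex.sq_norm z
    have hHsq : Complex.normSq (α * γ₁ + 1) ≤ Complex.normSq γ₁ := by
      have h1' := norm_nonneg (α * γ₁ + 1)
      have h2' := Complex.sq_norm (α * γ₁ + 1)
      have h3' := Complex.sq_norm γ₁
      nlinarith
    have hasq : a ^ 2 = α.re ^ 2 + α.im ^ 2 := by
      rw [hadef, Complex.sq_norm, Complex.normSq_apply]; ring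
    obtain ⟨u, hu⟩ : ∃ u, α.re = u := ⟨_, rfl⟩
    obtain ⟨v, hv⟩ : ∃ v, α.im = v := ⟨_, rfl⟩
    obtain ⟨p, hp⟩ : ∃ p, γ₁.re = p := ⟨_, rfl⟩
    obtain ⟨q, hq⟩ : ∃ q, γ₁.im = q := ⟨_, rfl⟩
    have hre : z.re = t * p + u := by
      rw [hz]; simp [Complex.add_re, Complex.mul_re, hu, hp]
    have him : z.im = t * q - v := by
      rw [hz]; simp [Complex.add_im, Complex.mul_im, hv, hq]; ring
    have hA : Complex.normSq (α * γ₁ + 1) =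
        (u * p - v * q + 1) ^ 2 + (u * q + v * p) ^ 2 := by
      simp [Complex.normSq_apply, Complex.add_re, Complex.add_im, Complex.mul_re,
        Complex.mul_im, hu, hv, hp, hq]
      ring
    have hB : Complex.normSq γ₁ = p ^ 2 + q ^ 2 := by
      rw [Complex.normSq_apply, hp, hq]; ring
    have hzsq' : Complex.normSq z = (t * p + u) ^ 2 + (t * q - v) ^ 2 := by
      rw [Complex.normSq_apply, hre, him]; ring
    have ht' : t = u ^ 2 + v ^ 2 - 1 := by rw [htdef, hasq, hu, hv]
    have hid : (u * p - v * q) ^ 2 + (u * q + v * p) ^ 2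
        = (u ^ 2 + v ^ 2) * (p ^ 2 + q ^ 2) := by ring
    have hA2 : (u * p - v * q + 1) ^ 2 + (u * q + v * p) ^ 2
        = (u ^ 2 + v ^ 2) * (p ^ 2 + q ^ 2) + 2 * (u * p - v * q) + 1 := by ring
    have h7 : (u ^ 2 + v ^ 2) * (p ^ 2 + q ^ 2)
        = t * (p ^ 2 + q ^ 2) + (p ^ 2 + q ^ 2) := by rw [ht']; ring
    have hc : 2 * (u * p - v * q) ≤ -(t * (p ^ 2 + q ^ 2)) - 1 := by
      linarith [hHsq, hA, hA2, hB, h7]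
    have hcm : t * (2 * (u * p - v * q)) ≤ t * (-(t * (p ^ 2 + q ^ 2)) - 1) :=
      mul_le_mul_of_nonneg_left hc ht.le
    have hcm2 : t * (-(t * (p ^ 2 + q ^ 2)) - 1) = -(t * (t * (p ^ 2 + q ^ 2))) - t := by
      ring
    have hexp : (t * p + u) ^ 2 + (t * q - v) ^ 2
        = t * (t * (p ^ 2 + q ^ 2)) + t * (2 * (u * p - v * q)) + (u ^ 2 + v ^ 2) := by
      ring
    have hsq1 : ‖z‖ ^ 2 ≤ 1 := by
      rw [hzsq, hzsq']
      linarith [hcm, hcm2, hexp, ht']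
    exact (pow_le_one_iff_of_nonneg hznonneg two_ne_zero).mp hsq1
  refine ⟨p1, ?_, ?_⟩
  · rw [Metric.mem_closedBall, Complex.dist_eq]
    have heq : γ₁ - -(starRingEnd ℂ) α / ((t : ℝ) : ℂ)
        = (((t : ℝ) : ℂ) * γ₁ + (starRingEnd ℂ) α) / ((t : ℝ) : ℂ) := by
      field_simp
      ring
    rw [heq, norm_div, Complex.norm_real, Real.norm_eq_abs, abs_of_pos ht]
    gcongr
  · rw [Metric.mem_ball, Complex.dist_eq]
    set w : ℂ := (((t : ℝ) : ℂ) * γ₁ + (starRingEnd ℂ) α) / ((t : ℝ) : ℂ) with hw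
    have heq : γ₁ - γ₀⁻¹ - -(starRingEnd ℂ) α / ((t : ℝ) : ℂ) = w - γ₀⁻¹ := by
      rw [hw]
      field_simp
      ring
    rw [heq]
    have htri : ‖w - γ₀⁻¹‖ ≤ ‖w‖ + ‖γ₀⁻¹‖ := by
      simpa using norm_sub_le w γ₀⁻¹
    have h4 : ‖w‖ ≤ 1 / t := by
      rw [hw, norm_div, Complex.norm_real, Real.norm_eq_abs, abs_of_pos ht]
      gcongr
    have h5 : a ^ 2 / t = 1 / t + 1 := by
      have hne : t ≠ 0 := ht.ne'
      field_simp
      rw [htdef]; ring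
    calc ‖w - γ₀⁻¹‖ ≤ 1 / t + ‖γ₀⁻¹‖ := by linarith
      _ < 1 / t + 1 := by linarith
      _ = a ^ 2 / t := h5.symm
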